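/- The Barnes G-function satisfies the functional equation G(z+1) = Γ(z)·G(z) for every complex number z that is not a nonpositive integer, where G(z+1) = (2π)^{z/2} exp(−((γ+1)z² + z)/2) ∏_{n=1}^{∞} (1 + z/n)^n exp(−z + z²/(2n)) and Γ is the Gamma function. -/

import Mathlib

noncomputable section

open Complex Filter Topology Finset Nat

/-- The `n`-th factor (`n ≥ 1`) of the infinite product defining the Barnes G-function:
`(1 + z/n)^n exp(−z + z²/(2n))`. -/
def barnesFactor (z : ℂ) (n : ℕ) : ℂ :=
  (1 + z / ((n : ℂ) + 1)) ^ (n + 1) * Complex.exp (-z + z ^ 2 / (2 * ((n : ℂ) + 1)))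

/-- The Barnes G-function, defined by
`G(z+1) = (2π)^{z/2} exp(−((γ+1)z² + z)/2) ∏_{n=1}^{∞} (1 + z/n)^n exp(−z + z²/(2n))`,
with principal-branch complex powers. -/
def BarnesG (w : ℂ) : ℂ :=
  (2 * (Real.pi : ℂ)) ^ ((w - 1) / 2) *
    Complex.exp (-(((Real.eulerMascheroniConstant + 1) * (w - 1) ^ 2 + (w - 1)) / 2)) *
    ∏' n : ℕ, barnesFactor (w - 1) n

lemma logTaylor_three (w : ℂ) : Complex.logTaylor 3 w = w - w ^ 2 / 2 := by
  simp [Complex.logTaylor, Finset.sum_range_succ]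
  ring

lemma barnes_est (z : ℂ) {n : ℕ} (h : 2 * ‖z‖ ≤ (n : ℝ) + 1)
    (h2 : 2 / 3 * ‖z‖ ^ 3 / ((n : ℝ) + 1) ^ 2 ≤ 1) :
    ‖barnesFactor z n - 1‖ ≤ 4 / 3 * ‖z‖ ^ 3 / ((n : ℝ) + 1) ^ 2 := by
  have hn1 : (0:ℝ) < (n : ℝ) + 1 := by positivity
  have hnc : ((n : ℂ) + 1) ≠ 0 := Nat.cast_add_one_ne_zero n
  set w : ℂ := z / ((n : ℂ) + 1) with hw
  have hnorm : ‖((n : ℂ) + 1)‖ = (n : ℝ) + 1 := by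
    have : ((n : ℂ) + 1) = ((n + 1 : ℕ) : ℂ) := by push_cast; ring
    rw [this, Complex.norm_natCast]; push_cast; ring
  have hwn : ‖w‖ = ‖z‖ / ((n : ℝ) + 1) := by
    rw [hw, norm_div, hnorm]
  have hw2 : ‖w‖ ≤ 1 / 2 := by
    rw [hwn, div_le_div_iff₀ hn1 two_pos]; linarith
  have hw1 : ‖w‖ < 1 := lt_of_le_of_lt hw2 (by norm_num)
  have hne : (1 : ℂ) + w ≠ 0 := by
    intro hcon
    have : w = -1 := by linear_combination hcon
    rw [this] at hw2; simp at hw2; linarith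
  -- rewrite barnesFactor as exp
  set E : ℂ := ((n : ℂ) + 1) * (Complex.log (1 + w) - (w - w ^ 2 / 2)) with hE
  have hfac : barnesFactor z n = Complex.exp E := by
    rw [barnesFactor, ← Complex.exp_log hne, ← Complex.exp_nat_mul, ← Complex.exp_add, hE]
    congr 1
    have hwz : z = w * ((n : ℂ) + 1) := by rw [hw]; field_simp
    rw [hwz]
    field_simp
    push_cast
    ring
  have hEbound : ‖E‖ ≤ 2 / 3 * ‖z‖ ^ 3 / ((n : ℝ) + 1) ^ 2 := by
    have hlog := Complex.norm_log_sub_logTaylor_le 2 hw1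
    rw [logTaylor_three] at hlog
    have hinv : (1 - ‖w‖)⁻¹ ≤ 2 := by
      rw [inv_le_comm₀ (by linarith) two_pos]; linarith
    have : ‖Complex.log (1 + w) - (w - w ^ 2 / 2)‖ ≤ ‖w‖ ^ 3 * 2 / 3 := by
      refine hlog.trans ?_
      have h3 : ((2:ℕ) + 1 : ℝ) = 3 := by norm_num
      rw [h3]
      rw [div_le_div_iff₀ (by norm_num) (by norm_num)]
      nlinarith [pow_nonneg (norm_nonneg w) 3, norm_nonneg w]
    rw [hE, norm_mul, hnorm]
    calc ((n:ℝ) + 1) * ‖Complex.log (1 + w) - (w - w ^ 2 / 2)‖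
        ≤ ((n:ℝ) + 1) * (‖w‖ ^ 3 * 2 / 3) := by
          exact mul_le_mul_of_nonneg_left this (le_of_lt hn1)
      _ = 2 / 3 * ‖z‖ ^ 3 / ((n : ℝ) + 1) ^ 2 := by
          rw [hwn, div_pow]; field_simp
  rw [hfac]
  have hE1 : ‖E‖ ≤ 1 := hEbound.trans h2
  have := Complex.norm_exp_sub_one_le (x := E) hE1
  calc ‖Complex.exp E - 1‖ ≤ 2 * ‖E‖ := this
    _ ≤ 2 * (2 / 3 * ‖z‖ ^ 3 / ((n : ℝ) + 1) ^ 2) := by linarith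
    _ = 4 / 3 * ‖z‖ ^ 3 / ((n : ℝ) + 1) ^ 2 := by ring

lemma barnes_summable (z : ℂ) : Summable (fun n : ℕ => ‖barnesFactor z n - 1‖) := by
  have hg : Summable (fun n : ℕ => 4 / 3 * ‖z‖ ^ 3 / ((n : ℝ) + 1) ^ 2) := by
    have h0 : Summable (fun n : ℕ => 1 / ((n : ℝ)) ^ 2) :=
      Real.summable_one_div_nat_pow.mpr one_lt_two
    have h1 : Summable (fun n : ℕ => 1 / ((n : ℝ) + 1) ^ 2) := by
      have := (summable_nat_add_iff 1).mpr h0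
      refine this.congr fun n => ?_
      push_cast; ring
    have h2 := h1.mul_left (4 / 3 * ‖z‖ ^ 3)
    refine h2.congr fun n => ?_
    rw [mul_one_div]
  refine Summable.of_norm_bounded_eventually_nat hg ?_
  have hc : Tendsto (fun n : ℕ => (n : ℝ) + 1) atTop atTop :=
    tendsto_atTop_add_const_right _ _ tendsto_natCast_atTop_atTop
  have e1 : ∀ᶠ n : ℕ in atTop, 2 * ‖z‖ ≤ (n : ℝ) + 1 := hc.eventually_ge_atTop _
  have e2 : ∀ᶠ n : ℕ in atTop, 2 / 3 * ‖z‖ ^ 3 ≤ (n : ℝ) + 1 := hc.eventually_ge_atTop _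
  filter_upwards [e1, e2] with n h1 h2
  have hn1 : (0:ℝ) < (n : ℝ) + 1 := by positivity
  have h2' : 2 / 3 * ‖z‖ ^ 3 / ((n : ℝ) + 1) ^ 2 ≤ 1 := by
    rw [div_le_one (by positivity)]
    nlinarith
  have := barnes_est z h1 h2'
  rwa [Real.norm_eq_abs, _root_.abs_of_nonneg (norm_nonneg _)]

lemma barnes_multipliable (z : ℂ) (hz : ∀ n : ℕ, barnesFactor z n ≠ 0) :
    Multipliable (barnesFactor z) := by
  have hs : Summable (fun n : ℕ => Complex.log (barnesFactor z n)) := by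
    have h0 : Tendsto (fun n : ℕ => ‖barnesFactor z n - 1‖) atTop (𝓝 0) :=
      (barnes_summable z).tendsto_atTop_zero
    refine Summable.of_norm_bounded_eventually_nat (g := fun n => 3 / 2 * ‖barnesFactor z n - 1‖) ((barnes_summable z).mul_left _) ?_
    filter_upwards [h0.eventually_le_const (show (0:ℝ) < 1/2 by norm_num)] with n hn
    have h3 := Complex.norm_log_one_add_half_le_self hn
    simpa using h3
  exact Complex.multipliable_of_summable_log hs

lemma barnes_ratio {z : ℂ} (n : ℕ) (hn : z + n ≠ 0) :
    barnesFactor z n = barnesFactor (z - 1) n *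
      (((z + n + 1) / (z + n)) ^ (n + 1) *
        Complex.exp (-1 + (2 * z - 1) / (2 * ((n : ℂ) + 1)))) := by
  have hnc : ((n : ℂ) + 1) ≠ 0 := Nat.cast_add_one_ne_zero n
  have hbase : 1 + z / ((n : ℂ) + 1) =
      (1 + (z - 1) / ((n : ℂ) + 1)) * ((z + n + 1) / (z + n)) := by
    field_simp
    ring
  have harg : -z + z ^ 2 / (2 * ((n : ℂ) + 1)) =
      -(z - 1) + (z - 1) ^ 2 / (2 * ((n : ℂ) + 1)) + (-1 + (2 * z - 1) / (2 * ((n : ℂ) + 1))) := by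
    field_simp
    ring
  rw [barnesFactor, barnesFactor, hbase, mul_pow, harg, Complex.exp_add]
  ring

lemma barnes_telescope {z : ℂ} (hz : ∀ j : ℕ, z + j ≠ 0) (N : ℕ) :
    ∏ n ∈ Finset.range N, ((z + n + 1) / (z + n)) ^ (n + 1) =
      (z + N) ^ (N + 1) / ∏ j ∈ Finset.range (N + 1), (z + j) := by
  induction N with
  | zero =>
      simp
      rw [div_self]
      simpa using hz 0
  | succ N ih =>
      rw [Finset.prod_range_succ, ih,
        Finset.prod_range_succ (fun j => (z + (j:ℂ))) (N + 1)]
      have h1 : z + (N:ℂ) ≠ 0 := hz N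
      have h2 : (∏ j ∈ Finset.range (N + 1), (z + (j:ℂ))) ≠ 0 :=
        Finset.prod_ne_zero_iff.mpr fun j _ => hz j
      have hc : (((N + 1 : ℕ)) : ℂ) = (N : ℂ) + 1 := by push_cast; ring
      have h3 : z + ((N:ℂ) + 1) ≠ 0 := by
        have := hz (N + 1); rwa [hc] at this
      rw [hc]
      set P := ∏ j ∈ Finset.range (N + 1), (z + (j:ℂ)) with hPdef
      rw [div_pow, pow_succ (z + ((N:ℂ) + 1)) (N + 1)]
      have h4 : (z + (N:ℂ)) ^ (N + 1) ≠ 0 := pow_ne_zero _ h1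
      field_simp
      ring

lemma barnes_expsum (z : ℂ) (N : ℕ) :
    ∑ n ∈ Finset.range N, (-1 + (2 * z - 1) / (2 * ((n : ℂ) + 1))) =
      -(N : ℂ) + (2 * z - 1) / 2 * ((harmonic N : ℚ) : ℂ) := by
  rw [Finset.sum_add_distrib]
  congr 1
  · simp
  · have : ((harmonic N : ℚ) : ℂ) = ∑ n ∈ Finset.range N, (1 / ((n : ℂ) + 1)) := by
      rw [harmonic]
      push_cast
      exact Finset.sum_congr rfl fun n _ => by rw [one_div, add_comm]
    rw [this, Finset.mul_sum]
    refine Finset.sum_congr rfl fun n _ => ?_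
    have hnc : ((n : ℂ) + 1) ≠ 0 := Nat.cast_add_one_ne_zero n
    field_simp

-- L1 : (1 + z/N)^(N+1) → exp z
lemma tendsto_one_add_div_pow_succ (z : ℂ) :
    Tendsto (fun N : ℕ => (1 + z / (N : ℂ)) ^ (N + 1)) atTop (𝓝 (Complex.exp z)) := by
  have hc : Tendsto (fun n : ℕ => (n : ℝ)) atTop atTop := tendsto_natCast_atTop_atTop
  -- the argument tends to z
  have harg : Tendsto (fun N : ℕ => ((N : ℂ) + 1) * Complex.log (1 + z / (N : ℂ)))
      atTop (𝓝 z) := by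
    rw [tendsto_iff_norm_sub_tendsto_zero]
    have hb : Tendsto (fun N : ℕ => ((N:ℝ) + 1) * (‖z‖ ^ 2 / (N:ℝ) ^ 2) + ‖z‖ / (N:ℝ))
        atTop (𝓝 0) := by
      have l1 : Tendsto (fun N : ℕ => ((N:ℝ) + 1) * (‖z‖ ^ 2 / (N:ℝ) ^ 2)) atTop (𝓝 0) := by
        have : (fun N : ℕ => ((N:ℝ) + 1) * (‖z‖ ^ 2 / (N:ℝ) ^ 2))
            =ᶠ[atTop] fun N : ℕ => ‖z‖ ^ 2 * ((N:ℝ) + 1) / (N:ℝ) ^ 2 := by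
          filter_upwards with N; ring
        rw [tendsto_congr' this]
        apply Tendsto.congr' (f₁ := fun N : ℕ => ‖z‖ ^ 2 * (1 / (N:ℝ) + 1 / (N:ℝ) ^ 2))
        · filter_upwards [eventually_ne_atTop 0] with N hN
          have : ((N:ℝ)) ≠ 0 := Nat.cast_ne_zero.mpr hN
          field_simp
        · have h1 : Tendsto (fun N : ℕ => 1 / (N:ℝ)) atTop (𝓝 0) := tendsto_one_div_atTop_nhds_zero_nat
          have h2 : Tendsto (fun N : ℕ => 1 / (N:ℝ) ^ 2) atTop (𝓝 0) := by
            simpa [one_div, pow_two, mul_inv] using h1.mul h1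
          simpa using (h1.add h2).const_mul (‖z‖ ^ 2)
      have l2 : Tendsto (fun N : ℕ => ‖z‖ / (N:ℝ)) atTop (𝓝 0) := by
        simpa [div_eq_mul_inv] using tendsto_one_div_atTop_nhds_zero_nat.const_mul ‖z‖
      simpa using l1.add l2
    apply squeeze_zero' (Eventually.of_forall fun N => norm_nonneg _) _ hb
    have hev : ∀ᶠ N : ℕ in atTop, 2 * ‖z‖ ≤ (N : ℝ) ∧ 1 ≤ (N : ℝ) := by
      filter_upwards [hc.eventually_ge_atTop (2 * ‖z‖), hc.eventually_ge_atTop 1] with N h1 h2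
      exact ⟨h1, h2⟩
    filter_upwards [hev] with N ⟨h1, h1'⟩
    have hN0 : (0:ℝ) < (N:ℝ) := lt_of_lt_of_le one_pos h1'
    have hNc : ((N:ℂ)) ≠ 0 := by
      exact_mod_cast hN0.ne'
    set w : ℂ := z / (N : ℂ) with hwdef
    have hwn : ‖w‖ = ‖z‖ / (N:ℝ) := by
      rw [hwdef, norm_div, Complex.norm_natCast]
    have hw2 : ‖w‖ ≤ 1 / 2 := by
      rw [hwn, div_le_div_iff₀ hN0 two_pos]; linarith
    have hw1 : ‖w‖ < 1 := lt_of_le_of_lt hw2 (by norm_num)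
    have key : ((N : ℂ) + 1) * Complex.log (1 + w) - z =
        ((N : ℂ) + 1) * (Complex.log (1 + w) - w) + (w * 1) := by
      have : z = w * (N : ℂ) := by rw [hwdef]; field_simp
      rw [this]; ring
    rw [key]
    have hlog := Complex.norm_log_one_add_sub_self_le hw1
    have hinv : (1 - ‖w‖)⁻¹ ≤ 2 := by
      rw [inv_le_comm₀ (by linarith) two_pos]; linarith
    have hlog2 : ‖Complex.log (1 + w) - w‖ ≤ ‖w‖ ^ 2 := by
      refine hlog.trans ?_
      nlinarith [pow_nonneg (norm_nonneg w) 2]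
    calc ‖((N : ℂ) + 1) * (Complex.log (1 + w) - w) + w * 1‖
        ≤ ‖((N : ℂ) + 1) * (Complex.log (1 + w) - w)‖ + ‖w * 1‖ := norm_add_le _ _
      _ ≤ ((N:ℝ) + 1) * ‖w‖ ^ 2 + ‖w‖ := by
          rw [norm_mul, norm_mul, norm_one, mul_one]
          gcongr
          · have : ‖(N : ℂ) + 1‖ = (N:ℝ) + 1 := by
              have : ((N : ℂ) + 1) = ((N + 1 : ℕ) : ℂ) := by push_cast; ring
              rw [this, Complex.norm_natCast]; push_cast; ring
            rw [this]
      _ ≤ ((N:ℝ) + 1) * (‖z‖ ^ 2 / (N:ℝ) ^ 2) + ‖z‖ / (N:ℝ) := by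
          rw [hwn, div_pow]
  -- conclude via exp continuity
  have := (Complex.continuous_exp.tendsto z).comp harg
  apply this.congr'
  filter_upwards [hc.eventually_gt_atTop ‖z‖] with N hN
  have hN0 : (0:ℝ) < (N:ℝ) := lt_of_le_of_lt (norm_nonneg z) hN
  have hNne : N ≠ 0 := by exact_mod_cast hN0.ne'
  have hNc : ((N:ℂ)) ≠ 0 := Nat.cast_ne_zero.mpr hNne
  have hne : (1 : ℂ) + z / (N:ℂ) ≠ 0 := by
    intro hcon
    have h1 : z / (N:ℂ) = -1 := by linear_combination hcon
    have h2 : ‖z / (N:ℂ)‖ = 1 := by rw [h1]; simp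
    rw [norm_div, Complex.norm_natCast, div_eq_one_iff_eq hN0.ne'] at h2
    exact absurd h2 hN.ne
  simp only [Function.comp_apply]
  rw [show ((N:ℂ) + 1) = ((N + 1 : ℕ) : ℂ) by push_cast; ring, Complex.exp_nat_mul,
    Complex.exp_log hne]

lemma tendsto_harmonic_exp (z : ℂ) :
    Tendsto (fun N : ℕ => Complex.exp ((2*z-1)/2 * (((harmonic N : ℚ) : ℂ) - (Real.log N : ℂ))))
      atTop (𝓝 (Complex.exp ((2*z-1)/2 * (Real.eulerMascheroniConstant : ℂ)))) := by
  have h0 := Real.tendsto_harmonic_sub_log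
  have h1 : Tendsto (fun N : ℕ => ((((harmonic N : ℝ) - Real.log N) : ℝ) : ℂ)) atTop
      (𝓝 ((Real.eulerMascheroniConstant : ℝ) : ℂ)) :=
    (Complex.continuous_ofReal.tendsto _).comp h0
  have h2 := (h1.const_mul ((2*z-1)/2))
  have h3 := (Complex.continuous_exp.tendsto _).comp h2
  apply h3.congr
  intro N
  simp only [Function.comp_apply]
  congr 2
  push_cast
  ring

lemma tendsto_stirling' :
    Tendsto (fun N : ℕ => ((N:ℝ) ^ N * Real.exp (-(N:ℝ)) * Real.sqrt N / N ! : ℝ)) atTop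
      (𝓝 (Real.sqrt (2 * Real.pi))⁻¹) := by
  have h0 : Tendsto (fun N : ℕ => (Real.sqrt 2 * Stirling.stirlingSeq N)⁻¹) atTop
      (𝓝 (Real.sqrt 2 * Real.sqrt Real.pi)⁻¹) := by
    refine Tendsto.inv₀ (tendsto_const_nhds.mul Stirling.tendsto_stirlingSeq_sqrt_pi) ?_
    have := Real.pi_pos
    positivity
  rw [show Real.sqrt (2 * Real.pi) = Real.sqrt 2 * Real.sqrt Real.pi from
    Real.sqrt_mul (by norm_num) _]
  apply h0.congr'
  filter_upwards [eventually_ge_atTop 1] with N hN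
  have hN0 : (0:ℝ) < (N:ℝ) := by exact_mod_cast hN
  have hsN : Real.sqrt (N:ℝ) ≠ 0 := by positivity
  have hfac : (N ! : ℝ) ≠ 0 := by exact_mod_cast (Nat.factorial_pos N).ne'
  have hexp : Real.exp (-(N:ℝ)) ≠ 0 := Real.exp_ne_zero _
  have hNN : (N:ℝ) ^ N ≠ 0 := by positivity
  rw [Stirling.stirlingSeq]
  rw [show Real.sqrt (2 * (N:ℝ)) = Real.sqrt 2 * Real.sqrt (N:ℝ) from Real.sqrt_mul (by norm_num) _]
  rw [show ((N:ℝ) / Real.exp 1) ^ N = (N:ℝ) ^ N * Real.exp (-(N:ℝ)) by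
    rw [div_pow, ← Real.exp_nat_mul, mul_one, Real.exp_neg]
    ring]
  rw [mul_div_assoc']
  rw [inv_div]
  field_simp

lemma key_identity (z : ℂ) (hz : ∀ j : ℕ, z + (j:ℂ) ≠ 0) {N : ℕ} (hN : 1 ≤ N) :
    ((z + N) ^ (N + 1) / ∏ j ∈ Finset.range (N + 1), (z + j)) *
      Complex.exp (-(N:ℂ) + (2*z-1)/2 * ((harmonic N : ℚ) : ℂ)) =
    Complex.GammaSeq z N *
      ((1 + z / (N:ℂ)) ^ (N + 1) *
       Complex.exp ((2*z-1)/2 * (((harmonic N : ℚ) : ℂ) - (Real.log N : ℂ))) *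
       (((N:ℝ) ^ N * Real.exp (-(N:ℝ)) * Real.sqrt N / N ! : ℝ) : ℂ)) := by
  have hN0 : (0:ℝ) < (N:ℝ) := by exact_mod_cast hN
  have hNc : ((N:ℂ)) ≠ 0 := by exact_mod_cast hN0.ne'
  have hP : (∏ j ∈ Finset.range (N + 1), (z + (j:ℂ))) ≠ 0 :=
    Finset.prod_ne_zero_iff.mpr fun j _ => hz j
  have hfac : ((N ! : ℕ) : ℂ) ≠ 0 := by exact_mod_cast (Nat.factorial_pos N).ne'
  have hone : (1 : ℂ) + z / (N:ℂ) ≠ 0 := by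
    intro hcon
    apply hz N
    have : ((N:ℂ) + z) / (N:ℂ) = 0 := by
      rw [← hcon]; field_simp
    rw [div_eq_zero_iff] at this
    rcases this with h | h
    · linear_combination h
    · exact absurd h hNc
  have f1 : (z + (N:ℂ)) ^ (N + 1) = (1 + z / (N:ℂ)) ^ (N + 1) * ((N:ℂ)) ^ (N + 1) := by
    rw [← mul_pow]
    congr 1
    field_simp
    ring
  have f2 : ((N:ℂ)) ^ (z:ℂ) = Complex.exp (z * ((Real.log N : ℝ) : ℂ)) := by
    rw [Complex.cpow_def_of_ne_zero hNc, Complex.natCast_log, mul_comm]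
  have f3 : ((Real.sqrt N : ℝ) : ℂ) = Complex.exp (((Real.log N : ℝ) : ℂ) / 2) := by
    have : Real.sqrt (N:ℝ) = Real.exp (Real.log N / 2) := by
      rw [Real.sqrt_eq_rpow, Real.rpow_def_of_pos hN0]
      congr 1
      ring
    rw [this, Complex.ofReal_exp]
    norm_cast
  have f4 : ((Real.exp (-(N:ℝ)) : ℝ) : ℂ) = Complex.exp (-(N:ℂ)) := by
    rw [Complex.ofReal_exp, Complex.ofReal_neg, Complex.ofReal_natCast]
  have fc : (((N:ℝ) ^ N * Real.exp (-(N:ℝ)) * Real.sqrt N / N ! : ℝ) : ℂ)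
      = ((N:ℂ)) ^ N * Complex.exp (-(N:ℂ)) * Complex.exp (((Real.log N : ℝ) : ℂ) / 2)
        / ((N ! : ℕ) : ℂ) := by
    rw [Complex.ofReal_div, Complex.ofReal_mul, Complex.ofReal_mul, Complex.ofReal_pow, f3, f4]
    push_cast
    ring
  rw [Complex.GammaSeq, f1, f2, fc]
  field_simp [hP, hfac, Complex.exp_ne_zero]
  have hL : Complex.exp (Complex.log (N:ℂ)) = (N:ℂ) := Complex.exp_log hNc
  have hcomb : Complex.exp (z * Complex.log (N:ℂ)) *
      Complex.exp ((z * 2 - 1) * (((harmonic N : ℚ) : ℂ) - Complex.log (N:ℂ)) / 2) *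
      Complex.exp (-(N:ℂ)) * Complex.exp (Complex.log (N:ℂ) / 2)
      = Complex.exp ((-((N:ℂ) * 2) + (z * 2 - 1) * ((harmonic N : ℚ) : ℂ)) / 2) * (N:ℂ) := by
    rw [← Complex.exp_add, ← Complex.exp_add, ← Complex.exp_add,
      show z * Complex.log (N:ℂ) + (z * 2 - 1) * (((harmonic N : ℚ) : ℂ) - Complex.log (N:ℂ)) / 2 +
        -(N:ℂ) + Complex.log (N:ℂ) / 2
        = (-((N:ℂ) * 2) + (z * 2 - 1) * ((harmonic N : ℚ) : ℂ)) / 2 + Complex.log (N:ℂ) from by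
          ring, Complex.exp_add, hL]
  rw [pow_succ (N:ℂ) N, Complex.natCast_log]
  linear_combination (-(((↑N + z) / (N:ℂ)) ^ (N + 1) * (N:ℂ) ^ N)) * hcomb


/-- the Barnes G-function satisfies `G(z+1) = Γ(z)·G(z)` for every complex `z`
which is not a nonpositive integer. -/
theorem barnesG_functional_equation (z : ℂ) (hz : ∀ n : ℕ, z ≠ -(n : ℂ)) :
    BarnesG (z + 1) = Complex.Gamma z * BarnesG z := by
  have hz' : ∀ j : ℕ, z + (j : ℂ) ≠ 0 := fun j h => hz j (by linear_combination h)
  have hzf : ∀ n : ℕ, barnesFactor z n ≠ 0 := by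
    intro n
    refine mul_ne_zero (pow_ne_zero _ ?_) (Complex.exp_ne_zero _)
    intro h
    have hnc : ((n : ℂ) + 1) ≠ 0 := Nat.cast_add_one_ne_zero n
    apply hz' (n + 1)
    push_cast
    have : ((n : ℂ) + 1) + z = 0 := by
      have := mul_eq_zero_of_left h ((n : ℂ) + 1)
      field_simp at this
      linear_combination this
    linear_combination this
  have hz1f : ∀ n : ℕ, barnesFactor (z - 1) n ≠ 0 := by
    intro n
    refine mul_ne_zero (pow_ne_zero _ ?_) (Complex.exp_ne_zero _)
    intro h
    have hnc : ((n : ℂ) + 1) ≠ 0 := Nat.cast_add_one_ne_zero n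
    apply hz' n
    have : ((n : ℂ) + 1) + (z - 1) = 0 := by
      have := mul_eq_zero_of_left h ((n : ℂ) + 1)
      field_simp at this
      linear_combination this
    linear_combination this
  have hm1 : Multipliable (barnesFactor z) := barnes_multipliable z hzf
  have hm2 : Multipliable (barnesFactor (z - 1)) := barnes_multipliable _ hz1f
  set S : ℂ := ((Real.sqrt (2 * Real.pi) : ℝ) : ℂ) with hS
  set K : ℂ := Complex.exp z * Complex.exp ((2 * z - 1) / 2 * ((Real.eulerMascheroniConstant : ℝ) : ℂ)) * S⁻¹ with hK
  set R : ℕ → ℂ := fun N =>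
    ((z + N) ^ (N + 1) / ∏ j ∈ Finset.range (N + 1), (z + j)) *
      Complex.exp (-(N : ℂ) + (2 * z - 1) / 2 * ((harmonic N : ℚ) : ℂ)) with hRdef
  have hR : Tendsto R atTop (𝓝 (Complex.Gamma z * K)) := by
    have h1 := Complex.GammaSeq_tendsto_Gamma z
    have h2 := tendsto_one_add_div_pow_succ z
    have h3 := tendsto_harmonic_exp z
    have h4 : Tendsto
        (fun N : ℕ => (((N : ℝ) ^ N * Real.exp (-(N : ℝ)) * Real.sqrt N / N ! : ℝ) : ℂ))
        atTop (𝓝 (((Real.sqrt (2 * Real.pi))⁻¹ : ℝ) : ℂ)) :=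
      (Complex.continuous_ofReal.tendsto _).comp tendsto_stirling'
    have h5 := h1.mul ((h2.mul h3).mul h4)
    have hKval : Complex.Gamma z * K =
        Complex.Gamma z * (Complex.exp z * Complex.exp ((2 * z - 1) / 2 * ((Real.eulerMascheroniConstant : ℝ) : ℂ)) *
          (((Real.sqrt (2 * Real.pi))⁻¹ : ℝ) : ℂ)) := by
      rw [hK, hS]
      push_cast
      ring
    rw [hKval]
    apply h5.congr'
    filter_upwards [eventually_ge_atTop 1] with N hN
    exact (key_identity z hz' hN).symm
  have key : ∀ N : ℕ, (∏ n ∈ Finset.range N, barnesFactor z n) =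
      (∏ n ∈ Finset.range N, barnesFactor (z - 1) n) * R N := by
    intro N
    have e1 : (∏ n ∈ Finset.range N, barnesFactor z n) =
        ∏ n ∈ Finset.range N, (barnesFactor (z - 1) n *
          (((z + n + 1) / (z + n)) ^ (n + 1) *
            Complex.exp (-1 + (2 * z - 1) / (2 * ((n : ℂ) + 1))))) :=
      Finset.prod_congr rfl fun n _ => barnes_ratio n (hz' n)
    rw [e1, Finset.prod_mul_distrib, Finset.prod_mul_distrib, ← Complex.exp_sum,
      barnes_expsum, barnes_telescope hz', hRdef]
  have hp1 := hm1.hasProd.tendsto_prod_nat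
  have hp2 := hm2.hasProd.tendsto_prod_nat
  have htp : (∏' n, barnesFactor z n) =
      (∏' n, barnesFactor (z - 1) n) * (Complex.Gamma z * K) := by
    refine tendsto_nhds_unique ?_ (hp2.mul hR)
    exact hp1.congr key
  rw [BarnesG, BarnesG]
  simp only [add_sub_cancel_right]
  rw [htp]
  have h2pi0 : (0:ℝ) < 2 * Real.pi := by positivity
  have h2pic : (2 * (Real.pi : ℂ)) ≠ 0 := by
    simp [Real.pi_ne_zero, Complex.ofReal_ne_zero]
  have hsqrt : (2 * (Real.pi : ℂ)) ^ ((1 : ℂ) / 2) = S := by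
    rw [hS, show Real.sqrt (2 * Real.pi) = (2 * Real.pi) ^ ((1:ℝ)/2) from
      Real.sqrt_eq_rpow _, Complex.ofReal_cpow h2pi0.le]
    push_cast
    ring_nf
  have hsplit : (2 * (Real.pi : ℂ)) ^ (z / 2) =
      (2 * (Real.pi : ℂ)) ^ ((z - 1) / 2) * S := by
    rw [← hsqrt, ← Complex.cpow_add _ _ h2pic]
    congr 1
    ring
  have hSne : S ≠ 0 := by
    rw [hS]
    exact_mod_cast (Real.sqrt_pos.mpr h2pi0).ne'
  rw [hsplit, hK]
  field_simp [hSne]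
  have hexp : cexp (-(z * (z * (((Real.eulerMascheroniConstant : ℝ) : ℂ) + 1) + 1) / 2)) *
      (cexp z * cexp (((Real.eulerMascheroniConstant : ℝ) : ℂ) * (2 * z - 1) / 2)) =
      cexp (-((z - 1) * ((z - 1) * (((Real.eulerMascheroniConstant : ℝ) : ℂ) + 1) + 1) / 2)) := by
    rw [← Complex.exp_add, ← Complex.exp_add]
    congr 1
    ring
  linear_combination ((∏' n, barnesFactor (z - 1) n) * Complex.Gamma z) * hexp
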